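/- Let Φ be a root system none of whose irreducible components is of type G₂, with positive roots Φ⁺ = {β₁, …, β_r}, and let γ ∈ Φ⁺. If n, ν₁, …, ν_r are non-negative integers satisfying n·γ = ν₁β₁ + ⋯ + ν_rβ_r, then n ≤ ν₁ + ⋯ + ν_r. -/

import Mathlib

/-- A reduced root system in a real inner ℝ product space, together with a base of simple
roots with respect to which every root is a non-negative or non-positive integral
combination of simple roots. -/
structure RootSystemWithBase (V : Type*) [NormedAddCommGroup V] [InnerProductSpace ℝ V] where
  roots : Finset V
  simples : Finset V
  simples_subset : simples ⊆ roots
  simples_indep : LinearIndependent ℝ (fun a : {x // x ∈ simples} => (a : V))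
  root_ne_zero : ∀ α ∈ roots, α ≠ 0
  span_eq_top : Submodule.span ℝ (roots : Set V) = ⊤
  reflect_mem : ∀ α ∈ roots, ∀ β ∈ roots,
    β - ((2 * inner ℝ β α / inner ℝ α α : ℝ)) • α ∈ roots
  pairing_int : ∀ α ∈ roots, ∀ β ∈ roots, ∃ n : ℤ, (2 * inner ℝ β α / inner ℝ α α : ℝ) = (n : ℝ)
  reduced : ∀ α ∈ roots, ∀ t : ℝ, t • α ∈ roots → t = 1 ∨ t = -1
  pos_or_neg : ∀ β ∈ roots,
    (∃ c : {x // x ∈ simples} → ℕ, β = ∑ a : {x // x ∈ simples}, (c a : ℝ) • (a : V)) ∨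
    (∃ c : {x // x ∈ simples} → ℕ, -β = ∑ a : {x // x ∈ simples}, (c a : ℝ) • (a : V))

/-- A positive root: a root which is a non-negative integral combination of the simple roots. -/
def RootSystemWithBase.IsPos {V : Type*} [NormedAddCommGroup V] [InnerProductSpace ℝ V]
    (S : RootSystemWithBase V) (β : V) : Prop :=
  β ∈ S.roots ∧
    ∃ c : {x // x ∈ S.simples} → ℕ, β = ∑ a : {x // x ∈ S.simples}, (c a : ℝ) • (a : V)

/-- Let `Φ` be a root system none of whose irreducible components is of type `G₂`
(equivalently, the squared length ratio of any two roots lies in `{1/2, 1, 2}`), with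
positive roots `Φ⁺ = {β₁, …, β_r}` and `γ ∈ Φ⁺`. If `n·γ = ν₁β₁ + ⋯ + ν_rβ_r` with
non-negative integers `n, νᵢ`, then `n ≤ ν₁ + ⋯ + ν_r`. -/

lemma key_ineq {V : Type*} [NormedAddCommGroup V] [InnerProductSpace ℝ V]
    (S : RootSystemWithBase V)
    (hratio : ∀ β ∈ S.roots, ∀ γ ∈ S.roots,
      ‖β‖ ^ 2 / ‖γ‖ ^ 2 = 1 / 2 ∨ ‖β‖ ^ 2 / ‖γ‖ ^ 2 = 1 ∨ ‖β‖ ^ 2 / ‖γ‖ ^ 2 = 2)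
    {b g : V} (hb : b ∈ S.roots) (hg : g ∈ S.roots) :
    (inner ℝ b g : ℝ) ≤ inner ℝ g g := by
  obtain ⟨m, hm⟩ := S.pairing_int g hg b hb
  have hgg : (inner ℝ g g : ℝ) = ‖g‖ ^ 2 := real_inner_self_eq_norm_sq g
  have hgn : (0:ℝ) < ‖g‖ ^ 2 := by
    have : (0:ℝ) < ‖g‖ := norm_pos_iff.mpr (S.root_ne_zero g hg)
    positivity
  have hgpos : (0 : ℝ) < inner ℝ g g := by rw [hgg]; exact hgn
  have hbb : ‖b‖ ^ 2 ≤ 2 * ‖g‖ ^ 2 := by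
    rcases hratio b hb g hg with h | h | h <;>
      rw [div_eq_iff hgn.ne'] at h <;> linarith
  have h2 : 2 * (inner ℝ b g : ℝ) = m * inner ℝ g g := by
    field_simp at hm
    linarith [hm]
  have hcs : (inner ℝ b g : ℝ) ^ 2 ≤ ‖b‖ ^ 2 * ‖g‖ ^ 2 := by
    have h := abs_real_inner_le_norm b g
    have h' : |(inner ℝ b g : ℝ)| ^ 2 ≤ (‖b‖ * ‖g‖) ^ 2 := by
      have := abs_nonneg (inner ℝ b g : ℝ)
      nlinarith
    rw [sq_abs] at h'
    nlinarith
  have hm2 : (m : ℝ) ^ 2 ≤ 8 := by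
    have h1 : ((m:ℝ) * inner ℝ g g) ^ 2 ≤ 8 * (inner ℝ g g) ^ 2 := by
      rw [hgg]; rw [hgg] at h2
      have he : ((m:ℝ) * ‖g‖ ^ 2) ^ 2 = 4 * (inner ℝ b g : ℝ) ^ 2 := by
        rw [← h2]; ring
      have hmul : ‖b‖ ^ 2 * ‖g‖ ^ 2 ≤ 2 * ‖g‖ ^ 2 * ‖g‖ ^ 2 :=
        mul_le_mul_of_nonneg_right hbb hgn.le
      rw [he]; nlinarith [hcs, hmul]
    nlinarith [mul_pos hgpos hgpos]
  have hm2' : m ^ 2 ≤ 8 := by exact_mod_cast hm2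
  have hmle : m ≤ 2 := by nlinarith
  have : (m : ℝ) ≤ 2 := by exact_mod_cast hmle
  nlinarith [hgpos]

theorem statement6 {V : Type*} [NormedAddCommGroup V] [InnerProductSpace ℝ V]
    (S : RootSystemWithBase V)
    (hratio : ∀ β ∈ S.roots, ∀ γ ∈ S.roots,
      ‖β‖ ^ 2 / ‖γ‖ ^ 2 = 1 / 2 ∨ ‖β‖ ^ 2 / ‖γ‖ ^ 2 = 1 ∨ ‖β‖ ^ 2 / ‖γ‖ ^ 2 = 2)
    (r : ℕ) (β : Fin r → V) (hβpos : ∀ i, S.IsPos (β i))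
    (hβall : ∀ δ : V, S.IsPos δ → ∃ i, β i = δ)
    (γ : V) (hγ : S.IsPos γ) (n : ℕ) (ν : Fin r → ℕ)
    (hsum : (n : ℝ) • γ = ∑ i, (ν i : ℝ) • β i) :
    n ≤ ∑ i, ν i := by
  obtain ⟨hγr, _⟩ := hγ
  have hgpos : (0 : ℝ) < inner ℝ γ γ := by
    rw [real_inner_self_eq_norm_sq]
    have : (0:ℝ) < ‖γ‖ := norm_pos_iff.mpr (S.root_ne_zero γ hγr)
    positivity
  have hinner : (n : ℝ) * inner ℝ γ γ = ∑ i, (ν i : ℝ) * inner ℝ (β i) γ := by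
    have := congrArg (fun v => (inner ℝ v γ : ℝ)) hsum
    simpa [sum_inner, real_inner_smul_left] using this
  have hle : (n : ℝ) * inner ℝ γ γ ≤ (∑ i, (ν i : ℝ)) * inner ℝ γ γ := by
    rw [hinner, Finset.sum_mul]
    apply Finset.sum_le_sum
    intro i _
    have := key_ineq S hratio (hβpos i).1 hγr
    have hν : (0:ℝ) ≤ (ν i : ℝ) := by positivity
    nlinarith
  have : (n : ℝ) ≤ ∑ i, (ν i : ℝ) := le_of_mul_le_mul_right (by linarith) hgpos
  exact_mod_cast (by push_cast at this ⊢; linarith : (n:ℝ) ≤ ((∑ i, ν i : ℕ) : ℝ))
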